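/- Let X be a random variable with regularly varying right tail of index -α, α > 0, satisfying P[X < -x]/P[X > x] → 0 as x → ∞. Let Θ be a positive random variable independent of X with E[Θ^α] < ∞, P[Θ > x] = o(P[X > x]), and suppose P[ΘX⁺ > x] ~ E[Θ^α] P[X > x] holds (Breiman asymptotics). Then for every u > 0, P[ΘX < -ux] / P[ΘX > x] → 0 as x → ∞. -/

import Mathlib

open MeasureTheory ProbabilityTheory Filter Real Topology Set
open scoped ENNReal

section Aux


lemma key_ineq {Ω : Type*} [MeasurableSpace Ω] (μ : Measure Ω) [IsProbabilityMeasure μ]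
    (X Θ : Ω → ℝ) (hX : Measurable X) (hΘ : Measurable Θ) (hΘpos : ∀ ω, 0 < Θ ω)
    (hindep : IndepFun Θ X μ) (ε : ℝ) (hε : 0 ≤ ε) (y₀ : ℝ) (hy₀ : 0 < y₀)
    (hb : ∀ y ≥ y₀, μ {ω | X ω < -y} ≤ ENNReal.ofReal ε * μ {ω | X ω > y})
    (a : ℝ) (ha : 0 < a) :
    μ {ω | Θ ω * X ω < -a} ≤
      ENNReal.ofReal ε * μ {ω | Θ ω * X ω > a} + μ {ω | Θ ω > a / y₀} := by
  set ν := μ.map Θ with hν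
  set ρ := μ.map X with hρ
  haveI : IsProbabilityMeasure ρ := Measure.isProbabilityMeasure_map hX.aemeasurable
  haveI : IsProbabilityMeasure ν := Measure.isProbabilityMeasure_map hΘ.aemeasurable
  have hmap : μ.map (fun ω => (Θ ω, X ω)) = ν.prod ρ :=
    (indepFun_iff_map_prod_eq_prod_map_map hΘ.aemeasurable hX.aemeasurable).mp hindep
  have hS : MeasurableSet {p : ℝ × ℝ | p.1 * p.2 < -a} :=
    measurableSet_lt (measurable_fst.mul measurable_snd) measurable_const
  have hS' : MeasurableSet {p : ℝ × ℝ | p.1 * p.2 > a} :=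
    measurableSet_lt measurable_const (measurable_fst.mul measurable_snd)
  have h1 : μ {ω | Θ ω * X ω < -a} = ∫⁻ θ, ρ {x | θ * x < -a} ∂ν := by
    have : μ {ω | Θ ω * X ω < -a}
        = μ.map (fun ω => (Θ ω, X ω)) {p : ℝ × ℝ | p.1 * p.2 < -a} := by
      rw [Measure.map_apply (hΘ.prodMk hX) hS]; rfl
    rw [this, hmap, Measure.prod_apply hS]; rfl
  have h2 : μ {ω | Θ ω * X ω > a} = ∫⁻ θ, ρ {x | θ * x > a} ∂ν := by
    have : μ {ω | Θ ω * X ω > a}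
        = μ.map (fun ω => (Θ ω, X ω)) {p : ℝ × ℝ | p.1 * p.2 > a} := by
      rw [Measure.map_apply (hΘ.prodMk hX) hS']; rfl
    rw [this, hmap, Measure.prod_apply hS']; rfl
  have hgm : Measurable fun θ => ρ {x | θ * x > a} := by
    have h := measurable_measure_prodMk_left (ν := ρ) hS'
    exact h
  have hae : ∀ᵐ θ ∂ν, 0 < θ :=
    (MeasureTheory.ae_map_iff hΘ.aemeasurable measurableSet_Ioi).mpr (ae_of_all _ hΘpos)
  have hbound : ∀ᵐ θ ∂ν, ρ {x | θ * x < -a} ≤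
      ENNReal.ofReal ε * ρ {x | θ * x > a} + (Ioi (a / y₀)).indicator (fun _ => 1) θ := by
    filter_upwards [hae] with θ hθ
    by_cases hcase : θ ≤ a / y₀
    · have hy : y₀ ≤ a / θ := by
        rw [le_div_iff₀ hθ]
        calc y₀ * θ ≤ y₀ * (a / y₀) := by
              exact mul_le_mul_of_nonneg_left hcase hy₀.le
          _ = a := by field_simp
      have e1 : {x : ℝ | θ * x < -a} = Iio (-(a / θ)) := by
        ext x
        simp only [mem_setOf_eq, mem_Iio]
        rw [mul_comm, ← lt_div_iff₀ hθ, neg_div]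
      have e2 : {x : ℝ | θ * x > a} = Ioi (a / θ) := by
        ext x
        simp only [mem_setOf_eq, mem_Ioi, gt_iff_lt]
        rw [mul_comm, ← div_lt_iff₀ hθ]
      have r1 : ρ {x | θ * x < -a} = μ {ω | X ω < -(a / θ)} := by
        rw [e1, hρ, Measure.map_apply hX measurableSet_Iio]; rfl
      have r2 : ρ {x | θ * x > a} = μ {ω | X ω > a / θ} := by
        rw [e2, hρ, Measure.map_apply hX measurableSet_Ioi]; rfl
      rw [r1, r2]
      exact le_add_right (hb _ hy)
    · have : (Ioi (a / y₀)).indicator (fun _ => (1:ℝ≥0∞)) θ = 1 := by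
        rw [indicator_of_mem]; exact lt_of_not_ge hcase
      rw [this]
      exact le_add_left (le_trans (measure_mono (subset_univ _)) (by simp))
  calc μ {ω | Θ ω * X ω < -a} = ∫⁻ θ, ρ {x | θ * x < -a} ∂ν := h1
    _ ≤ ∫⁻ θ, (ENNReal.ofReal ε * ρ {x | θ * x > a}
          + (Ioi (a / y₀)).indicator (fun _ => 1) θ) ∂ν := lintegral_mono_ae hbound
    _ = ENNReal.ofReal ε * ∫⁻ θ, ρ {x | θ * x > a} ∂ν + ν (Ioi (a / y₀)) := by
        rw [lintegral_add_left (hgm.const_mul _), lintegral_const_mul _ hgm]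
        congr 1
        simpa using lintegral_indicator_one (μ := ν) (measurableSet_Ioi (a := a / y₀))
    _ = ENNReal.ofReal ε * μ {ω | Θ ω * X ω > a} + μ {ω | Θ ω > a / y₀} := by
        rw [← h2, hν, Measure.map_apply hΘ measurableSet_Ioi]; rfl


lemma ratio_limit (F D : ℝ → ℝ) (C : ℝ) (hC : 0 < C) (hFpos : ∀ x, 0 < F x)
    (hG : Tendsto (fun x => D x / (C * F x)) atTop (𝓝 1))
    (c : ℝ) (hc : 0 < c) (L : ℝ)
    (hF : Tendsto (fun x => F (c * x) / F x) atTop (𝓝 L)) :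
    Tendsto (fun x => D (c * x) / D x) atTop (𝓝 L) := by
  have hcomp : Tendsto (fun x => c * x) atTop atTop := tendsto_id.const_mul_atTop hc
  have hGc : Tendsto (fun x => D (c * x) / (C * F (c * x))) atTop (𝓝 1) := hG.comp hcomp
  have hlim : Tendsto (fun x =>
      (D (c * x) / (C * F (c * x)) * (F (c * x) / F x)) / (D x / (C * F x)))
      atTop (𝓝 L) := by
    have := (hGc.mul hF).div hG one_ne_zero
    rw [one_mul, div_one] at this
    exact this
  refine hlim.congr' ?_
  have hev : ∀ᶠ x in atTop, 1/2 < D x / (C * F x) := hG.eventually_const_lt (by norm_num)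
  filter_upwards [hev] with x hx
  have hDx : D x ≠ 0 := by
    intro h
    rw [h, zero_div] at hx
    norm_num at hx
  have h1 : F x ≠ 0 := (hFpos x).ne'
  have h2 : F (c * x) ≠ 0 := (hFpos (c * x)).ne'
  field_simp

lemma ratio_limit0 (F D T : ℝ → ℝ) (C : ℝ) (hC : 0 < C) (hFpos : ∀ x, 0 < F x)
    (hG : Tendsto (fun x => D x / (C * F x)) atTop (𝓝 1))
    (c L : ℝ) (hc : 0 < c)
    (hT : Tendsto (fun x => T (c * x) / F (c * x)) atTop (𝓝 0))
    (hF : Tendsto (fun x => F (c * x) / F x) atTop (𝓝 L)) :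
    Tendsto (fun x => T (c * x) / D x) atTop (𝓝 0) := by
  have hlim : Tendsto (fun x =>
      (T (c * x) / F (c * x) * (F (c * x) / F x)) / (D x / (C * F x)) / C)
      atTop (𝓝 0) := by
    have := (((hT.mul hF).div hG one_ne_zero).div_const C)
    simpa using this
  refine hlim.congr' ?_
  have hev : ∀ᶠ x in atTop, 1/2 < D x / (C * F x) := hG.eventually_const_lt (by norm_num)
  filter_upwards [hev] with x hx
  have hDx : D x ≠ 0 := by
    intro h
    rw [h, zero_div] at hx
    norm_num at hx
  have h1 : F x ≠ 0 := (hFpos x).ne'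
  have h2 : F (c * x) ≠ 0 := (hFpos (c * x)).ne'
  field_simp


end Aux

/-- negligibility of the left tail is inherited by the product `ΘX`. -/
theorem stmt_4 {Ω : Type*} [MeasurableSpace Ω] (μ : Measure Ω) [IsProbabilityMeasure μ]
    (X Θ : Ω → ℝ) (hX : Measurable X) (hΘ : Measurable Θ)
    (hΘpos : ∀ ω, 0 < Θ ω)
    (α : ℝ) (hα : 0 < α)
    -- regularly varying right tail of index -α
    (hrv : ∀ t > (0:ℝ),
      Tendsto (fun x => (μ {ω | X ω > t * x}).toReal / (μ {ω | X ω > x}).toReal)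
        atTop (𝓝 (t ^ (-α))))
    -- negligible left tail
    (hneg : Tendsto (fun x => (μ {ω | X ω < -x}).toReal / (μ {ω | X ω > x}).toReal)
      atTop (𝓝 0))
    -- Θ independent of X
    (hindep : IndepFun Θ X μ)
    (hmom : ∫⁻ ω, ENNReal.ofReal (Θ ω ^ α) ∂μ ≠ ⊤)
    (ho : Tendsto (fun x => (μ {ω | Θ ω > x}).toReal / (μ {ω | X ω > x}).toReal)
      atTop (𝓝 0))
    -- Breiman asymptotics for Θ X⁺
    (hbr : Tendsto (fun x => (μ {ω | Θ ω * max (X ω) 0 > x}).toReal /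
        ((∫⁻ ω, ENNReal.ofReal (Θ ω ^ α) ∂μ).toReal * (μ {ω | X ω > x}).toReal))
      atTop (𝓝 1)) :
    ∀ u > (0:ℝ),
      Tendsto (fun x => (μ {ω | Θ ω * X ω < -(u * x)}).toReal /
        (μ {ω | Θ ω * X ω > x}).toReal) atTop (𝓝 0) := by
  intro u hu
  set C : ℝ := (∫⁻ ω, ENNReal.ofReal (Θ ω ^ α) ∂μ).toReal with hC
  -- the right tail of X never vanishes
  have hFne : ∀ x : ℝ, μ {ω | X ω > x} ≠ 0 := by
    intro x hx0
    have h2 := hrv 2 (by norm_num)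
    have hev : ∀ᶠ y in atTop,
        (μ {ω | X ω > 2 * y}).toReal / (μ {ω | X ω > y}).toReal = 0 := by
      filter_upwards [eventually_ge_atTop x] with y hy
      have hnull : μ {ω | X ω > y} = 0 :=
        measure_mono_null (fun ω h => lt_of_le_of_lt hy h) hx0
      rw [hnull]
      simp
    have h0 : Tendsto (fun y => (μ {ω | X ω > 2 * y}).toReal / (μ {ω | X ω > y}).toReal)
        atTop (𝓝 0) := Tendsto.congr' (by filter_upwards [hev] with y hy; rw [hy]) tendsto_const_nhds
    have := tendsto_nhds_unique h2 h0
    have hpos : (0:ℝ) < (2:ℝ) ^ (-α) := Real.rpow_pos_of_pos (by norm_num) _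
    rw [this] at hpos
    exact lt_irrefl _ hpos
  have hFpos : ∀ x : ℝ, 0 < (μ {ω | X ω > x}).toReal :=
    fun x => ENNReal.toReal_pos (hFne x) (measure_ne_top _ _)
  -- positivity of the moment constant
  have hCpos : 0 < C := by
    refine ENNReal.toReal_pos ?_ hmom
    have hm : Measurable fun ω => ENNReal.ofReal (Θ ω ^ α) :=
      ((Real.continuous_rpow_const hα.le).measurable.comp hΘ).ennreal_ofReal
    rw [← pos_iff_ne_zero, lintegral_pos_iff_support hm]
    have hsupp : Function.support (fun ω => ENNReal.ofReal (Θ ω ^ α)) = univ := by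
      refine eq_univ_of_forall fun ω => ?_
      simp only [Function.mem_support, ne_eq, ENNReal.ofReal_eq_zero, not_le]
      exact Real.rpow_pos_of_pos (hΘpos ω) _
    rw [hsupp, measure_univ]
    norm_num
  -- Breiman in terms of ΘX
  have hG : Tendsto (fun x => (μ {ω | Θ ω * X ω > x}).toReal /
      (C * (μ {ω | X ω > x}).toReal)) atTop (𝓝 1) := by
    refine hbr.congr' ?_
    filter_upwards [eventually_gt_atTop (0:ℝ)] with x hx
    have hset : {ω | Θ ω * max (X ω) 0 > x} = {ω | Θ ω * X ω > x} := by
      ext ω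
      simp only [mem_setOf_eq, gt_iff_lt]
      constructor
      · intro h
        rcases le_or_gt (X ω) 0 with h0 | h0
        · rw [max_eq_right h0, mul_zero] at h; linarith
        · rwa [max_eq_left h0.le] at h
      · intro h
        have hx0 : 0 < X ω := by
          by_contra hcon
          push_neg at hcon
          have : Θ ω * X ω ≤ 0 := mul_nonpos_of_nonneg_of_nonpos (hΘpos ω).le hcon
          linarith
        rwa [max_eq_left hx0.le]
    rw [hset]
  -- ratio limits
  have hDratio : ∀ c, 0 < c → Tendsto (fun x => (μ {ω | Θ ω * X ω > c * x}).toReal /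
      (μ {ω | Θ ω * X ω > x}).toReal) atTop (𝓝 (c ^ (-α))) := fun c hc =>
    ratio_limit (fun y => (μ {ω | X ω > y}).toReal)
      (fun y => (μ {ω | Θ ω * X ω > y}).toReal) C hCpos hFpos hG c hc _ (hrv c hc)
  have hTratio : ∀ c, 0 < c → Tendsto (fun x => (μ {ω | Θ ω > c * x}).toReal /
      (μ {ω | Θ ω * X ω > x}).toReal) atTop (𝓝 0) := fun c hc =>
    ratio_limit0 (fun y => (μ {ω | X ω > y}).toReal)
      (fun y => (μ {ω | Θ ω * X ω > y}).toReal)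
      (fun y => (μ {ω | Θ ω > y}).toReal) C hCpos hFpos hG c (c ^ (-α)) hc
      (ho.comp (tendsto_id.const_mul_atTop hc)) (hrv c hc)
  -- the squeeze
  rw [Metric.tendsto_nhds]
  intro δ hδ
  have huα : (0:ℝ) < u ^ (-α) + 1 := by positivity
  set ε : ℝ := δ / (2 * (u ^ (-α) + 1)) with hεdef
  have hε : 0 < ε := by positivity
  obtain ⟨y₁, hy₁⟩ := eventually_atTop.mp (hneg.eventually_lt_const hε)
  set y₀ : ℝ := max y₁ 1 with hy₀def
  have hy₀ : 0 < y₀ := lt_of_lt_of_le one_pos (le_max_right _ _)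
  have hb : ∀ y ≥ y₀, μ {ω | X ω < -y} ≤ ENNReal.ofReal ε * μ {ω | X ω > y} := by
    intro y hy
    have hr := hy₁ y (le_trans (le_max_left _ _) hy)
    have hFy := hFpos y
    have hle : (μ {ω | X ω < -y}).toReal ≤ ε * (μ {ω | X ω > y}).toReal := by
      rw [div_lt_iff₀ hFy] at hr
      exact hr.le
    calc μ {ω | X ω < -y} = ENNReal.ofReal ((μ {ω | X ω < -y}).toReal) :=
          (ENNReal.ofReal_toReal (measure_ne_top _ _)).symm
      _ ≤ ENNReal.ofReal (ε * (μ {ω | X ω > y}).toReal) := ENNReal.ofReal_le_ofReal hle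
      _ = ENNReal.ofReal ε * μ {ω | X ω > y} := by
          rw [ENNReal.ofReal_mul hε.le, ENNReal.ofReal_toReal (measure_ne_top _ _)]
  have hkey : ∀ x, 0 < x → (μ {ω | Θ ω * X ω < -(u * x)}).toReal ≤
      ε * (μ {ω | Θ ω * X ω > u * x}).toReal + (μ {ω | Θ ω > u / y₀ * x}).toReal := by
    intro x hx
    have h := key_ineq μ X Θ hX hΘ hΘpos hindep ε hε.le y₀ hy₀ hb (u * x) (mul_pos hu hx)
    rw [show u * x / y₀ = u / y₀ * x by ring] at h
    have hfin : ENNReal.ofReal ε * μ {ω | Θ ω * X ω > u * x} + μ {ω | Θ ω > u / y₀ * x} ≠ ⊤ :=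
      ENNReal.add_ne_top.mpr ⟨ENNReal.mul_ne_top ENNReal.ofReal_ne_top (measure_ne_top _ _),
        measure_ne_top _ _⟩
    have h' := ENNReal.toReal_mono hfin h
    rwa [ENNReal.toReal_add (ENNReal.mul_ne_top ENNReal.ofReal_ne_top (measure_ne_top _ _))
      (measure_ne_top _ _), ENNReal.toReal_mul, ENNReal.toReal_ofReal hε.le] at h'
  have h2 := (hDratio u hu).eventually_lt_const (lt_add_one _)
  have h3 := (hTratio (u / y₀) (div_pos hu hy₀)).eventually_lt_const (half_pos hδ)
  filter_upwards [h2, h3, eventually_gt_atTop (0:ℝ)] with x hx2 hx3 hx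
  have hr0 : 0 ≤ (μ {ω | Θ ω * X ω < -(u * x)}).toReal / (μ {ω | Θ ω * X ω > x}).toReal :=
    div_nonneg ENNReal.toReal_nonneg ENNReal.toReal_nonneg
  rw [Real.dist_eq, sub_zero, abs_of_nonneg hr0]
  rcases eq_or_lt_of_le (ENNReal.toReal_nonneg :
      (0:ℝ) ≤ (μ {ω | Θ ω * X ω > x}).toReal) with hD | hD
  · rw [← hD, div_zero]
    exact hδ
  · have step1 : (μ {ω | Θ ω * X ω < -(u * x)}).toReal / (μ {ω | Θ ω * X ω > x}).toReal ≤
        (ε * (μ {ω | Θ ω * X ω > u * x}).toReal + (μ {ω | Θ ω > u / y₀ * x}).toReal) /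
          (μ {ω | Θ ω * X ω > x}).toReal :=
      div_le_div_of_nonneg_right (hkey x hx) hD.le
    calc (μ {ω | Θ ω * X ω < -(u * x)}).toReal / (μ {ω | Θ ω * X ω > x}).toReal
        ≤ ε * ((μ {ω | Θ ω * X ω > u * x}).toReal / (μ {ω | Θ ω * X ω > x}).toReal) +
          (μ {ω | Θ ω > u / y₀ * x}).toReal / (μ {ω | Θ ω * X ω > x}).toReal := by
          rw [← mul_div_assoc, ← add_div]
          exact step1
      _ < ε * (u ^ (-α) + 1) + δ / 2 := by
          have := mul_lt_mul_of_pos_left hx2 hε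
          linarith
      _ = δ := by
          rw [hεdef]
          field_simp
          ring
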